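/- Let m be a positive integer not divisible by p and suppose d equals the multiplicative order of q modulo m. Then the number of monic irreducible polynomials over the finite field F_q (q = p^n, p prime) of degree d and order m equals φ(m)/d, where φ is Euler's totient function. -/

import Mathlib

/-- Entry (i,j) of the companion matrix of a monic polynomial
`f = a_0 + a_1 t + ... + a_{d-1} t^{d-1} + t^d`. -/
def companionEntry {F : Type} [Field F] (d : ℕ) (f : Polynomial F) (i j : ℕ) : F :=
  if i = d - 1 then -f.coeff j else if j = i + 1 then 1 else 0

/-- The companion matrix of a monic polynomial of degree d: 1's on the
superdiagonal, last row `(-a_0, ..., -a_{d-1})`, 0's elsewhere. -/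
def companionMatrix {F : Type} [Field F] (d : ℕ) (f : Polynomial F) :
    Matrix (Fin d) (Fin d) F :=
  Matrix.of fun i j => companionEntry d f (i : ℕ) (j : ℕ)

open Polynomial Matrix IntermediateField

lemma companion_eq_transpose {F : Type} [Field F] {f : Polynomial F}
    (hmo : f.Monic) (hdeg : 0 < f.natDegree) :
    companionMatrix f.natDegree f =
      (Algebra.leftMulMatrix (AdjoinRoot.powerBasis' hmo).basis (AdjoinRoot.root f))ᵀ := by
  ext i j
  erw [Matrix.transpose_apply, Algebra.leftMulMatrix_eq_repr_mul]
  have hbasis : ∀ k : Fin f.natDegree,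
      (AdjoinRoot.powerBasis' hmo).basis k = AdjoinRoot.root f ^ (k : ℕ) := by
    intro k
    have := (AdjoinRoot.powerBasis' hmo).basis_eq_pow k
    rwa [AdjoinRoot.powerBasis'_gen] at this
  rw [hbasis i]
  have hmul : AdjoinRoot.root f * AdjoinRoot.root f ^ (i : ℕ) =
      AdjoinRoot.mk f (X ^ ((i : ℕ) + 1)) := by
    rw [← pow_succ']
    rw [← AdjoinRoot.mk_X, ← map_pow]
  rw [hmul]
  have hrepr : ((AdjoinRoot.powerBasis' hmo).basis.repr (AdjoinRoot.mk f (X ^ ((i : ℕ) + 1)))) j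
      = ((X ^ ((i : ℕ) + 1)) %ₘ f).coeff (j : ℕ) := by
    show ((AdjoinRoot.powerBasisAux' hmo).repr _) j = _
    rw [AdjoinRoot.powerBasisAux'_repr_apply_to_fun, AdjoinRoot.modByMonicHom_mk]
  rw [hrepr]
  show companionEntry f.natDegree f (i : ℕ) (j : ℕ) = _
  unfold companionEntry
  by_cases hi : (i : ℕ) = f.natDegree - 1
  · -- i + 1 = natDegree, X^d %ₘ f = X^d - f
    have hi1 : (i : ℕ) + 1 = f.natDegree := by omega
    rw [hi1, if_pos hi]
    have hX : (X ^ f.natDegree : F[X]) %ₘ f = X ^ f.natDegree - f := by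
      have h1 : (X ^ f.natDegree - f : F[X]) + f = X ^ f.natDegree := by ring
      have h2 : ((X ^ f.natDegree - f : F[X]) + f) %ₘ f
          = (X ^ f.natDegree - f) %ₘ f + f %ₘ f := add_modByMonic _ _
      have h3 : f %ₘ f = 0 := by
        have := mul_self_modByMonic (p := (1 : F[X])) hmo
        rwa [one_mul] at this
      rw [h1, h3, add_zero] at h2
      rw [h2]
      rw [(modByMonic_eq_self_iff hmo).2]
      have h4 := degree_sub_lt
        (by rw [degree_X_pow, degree_eq_natDegree hmo.ne_zero] :
            (X ^ f.natDegree : F[X]).degree = f.degree)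
        (pow_ne_zero _ X_ne_zero)
        (by rw [leadingCoeff_X_pow, hmo.leadingCoeff])
      rwa [degree_X_pow, ← degree_eq_natDegree hmo.ne_zero] at h4
    rw [hX, coeff_sub, coeff_X_pow, if_neg (by omega : ¬ (j : ℕ) = f.natDegree), zero_sub]
  · have hi1 : (i : ℕ) + 1 < f.natDegree := by
      have := i.2; omega
    rw [if_neg hi]
    rw [(modByMonic_eq_self_iff hmo).2 (by
      rw [degree_X_pow, degree_eq_natDegree hmo.ne_zero]
      exact_mod_cast hi1), coeff_X_pow]

lemma orderOf_companionMatrix {F : Type} [Field F] {f : Polynomial F}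
    (hmo : f.Monic) (hirr : Irreducible f)
    {L : Type} [Field L] [Algebra F L] {x : L} (hx : Polynomial.aeval x f = 0) :
    orderOf (companionMatrix f.natDegree f) = orderOf x := by
  have hdeg : 0 < f.natDegree := hirr.natDegree_pos
  rw [companion_eq_transpose hmo hdeg]
  have htr : ∀ (M : Matrix (Fin f.natDegree) (Fin f.natDegree) F), orderOf Mᵀ = orderOf M := by
    intro M
    apply orderOf_eq_orderOf_iff.2
    intro l
    constructor
    · intro h
      have : (Mᵀ ^ l)ᵀ = (1 : Matrix _ _ F)ᵀ := by rw [h]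
      rwa [Matrix.transpose_pow, Matrix.transpose_transpose, Matrix.transpose_one] at this
    · intro h
      rw [← Matrix.transpose_pow, h, Matrix.transpose_one]
  erw [htr]
  have h1 : orderOf (Algebra.leftMulMatrix (AdjoinRoot.powerBasis' hmo).basis
      (AdjoinRoot.root f)) = orderOf (AdjoinRoot.root f) := by
    exact orderOf_injective
      (Algebra.leftMulMatrix (AdjoinRoot.powerBasis' hmo).basis).toRingHom.toMonoidHom
      (fun a b h => Algebra.leftMulMatrix_injective (AdjoinRoot.powerBasis' hmo).basis h) _
  erw [h1]
  haveI : Fact (Irreducible f) := ⟨hirr⟩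
  have hev : Polynomial.eval₂ (algebraMap F L) x f = 0 := by rwa [Polynomial.aeval_def] at hx
  have h2 : AdjoinRoot.lift (algebraMap F L) x hev (AdjoinRoot.root f) = x :=
    AdjoinRoot.lift_root hev
  rw [← h2]
  exact (orderOf_injective (AdjoinRoot.lift (algebraMap F L) x hev).toMonoidHom
    (RingHom.injective _) _).symm

lemma minpoly_natDegree_of_orderOf (p n m d : ℕ) (hp : p.Prime) (hn : 0 < n)
    (hm : 0 < m)
    (F : Type) [Field F] [Fintype F] (hF : Fintype.card F = p ^ n)
    (hd : IsLeast {e : ℕ | 0 < e ∧ m ∣ (p ^ n) ^ e - 1} d)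
    (K : Type) [Field K] [Algebra F K] [FiniteDimensional F K]
    (x : K) (hx : orderOf x = m) :
    (minpoly F x).natDegree = d := by
  classical
  haveI : Finite K := Module.finite_of_finite F
  haveI : Fintype K := Fintype.ofFinite K
  have hqx : IsIntegral F x := IsIntegral.of_finite F x
  set e := (minpoly F x).natDegree with he
  have he_pos : 0 < e := minpoly.natDegree_pos hqx
  haveI : Fintype ↥F⟮x⟯ := Fintype.ofFinite _
  have hfin : Module.finrank F ↥F⟮x⟯ = e := IntermediateField.adjoin.finrank hqx
  have hcard : Fintype.card ↥F⟮x⟯ = (p ^ n) ^ e := by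
    rw [Module.card_eq_pow_finrank (K := F) (V := ↥F⟮x⟯), hF, hfin]
  have hx0 : x ≠ 0 := by
    intro h
    have h1 := pow_orderOf_eq_one x
    rw [hx, h, zero_pow hm.ne'] at h1
    exact zero_ne_one h1
  -- d ≤ e
  set gen : ↥F⟮x⟯ := ⟨x, IntermediateField.mem_adjoin_simple_self F x⟩ with hgen
  have hgen_ord : orderOf gen = m := by
    have h1 : orderOf (F⟮x⟯.val gen) = orderOf gen :=
      orderOf_injective F⟮x⟯.val.toRingHom.toMonoidHom
        (fun a b hab => Subtype.ext hab) gen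
    have h2 : F⟮x⟯.val gen = x := rfl
    rw [h2, hx] at h1
    exact h1.symm
  have hgen0 : gen ≠ 0 := fun h => hx0 (congrArg Subtype.val h)
  have hdvd_e : m ∣ (p ^ n) ^ e - 1 := by
    have h1 := orderOf_dvd_natCard (Units.mk0 gen hgen0)
    have h2 : orderOf (Units.mk0 gen hgen0) = m := by
      rw [← orderOf_units, Units.val_mk0, hgen_ord]
    rw [h2, Nat.card_eq_fintype_card, Fintype.card_units, hcard] at h1
    exact h1
  have hde : d ≤ e := hd.2 ⟨he_pos, hdvd_e⟩
  -- e ≤ d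
  have hd_pos : 0 < d := hd.1.1
  have hmd : m ∣ (p ^ n) ^ d - 1 := hd.1.2
  -- char p
  obtain ⟨k, hrp, hcard'⟩ := FiniteField.card F (ringChar F)
  have hpr : p = ringChar F := by
    have h1 : p ∣ (ringChar F) ^ (k : ℕ) := by
      rw [← hcard', hF]; exact dvd_pow_self p hn.ne'
    exact (Nat.prime_dvd_prime_iff_eq hp hrp).mp (hp.dvd_of_dvd_pow h1)
  haveI : CharP F p := hpr ▸ ringChar.charP F
  haveI : CharP K p := charP_of_injective_algebraMap (algebraMap F K).injective p
  haveI : Fact p.Prime := ⟨hp⟩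
  set g : K →+* K := iterateFrobenius K p (n * d) with hg
  have hnd : n * d ≠ 0 := Nat.mul_ne_zero hn.ne' hd_pos.ne'
  have hxfix : x ^ p ^ (n * d) = x := by
    have h5 : x ^ ((p ^ n) ^ d - 1) = 1 := by
      apply orderOf_dvd_iff_pow_eq_one.mp
      rw [hx]; exact hmd
    have h6 : (p ^ n) ^ d - 1 + 1 = (p ^ n) ^ d :=
      Nat.succ_pred_eq_of_pos (pow_pos (pow_pos hp.pos n) d)
    rw [pow_mul, ← h6, pow_succ, h5, one_mul]
  have hfix : ∀ y : K, y ∈ F⟮x⟯ → g y = y := by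
    intro y hy
    induction hy using IntermediateField.adjoin_induction with
    | mem z hz =>
      rw [Set.mem_singleton_iff] at hz
      subst hz
      rw [hg, iterateFrobenius_def]
      exact hxfix
    | algebraMap a =>
      rw [hg, iterateFrobenius_def, ← _root_.map_pow, pow_mul, ← hF,
        FiniteField.pow_card_pow]
    | add a b _ _ ha hb => rw [_root_.map_add, ha, hb]
    | inv a _ ha => rw [_root_.map_inv₀, ha]
    | mul a b _ _ ha hb => rw [_root_.map_mul, ha, hb]
  set P : K[X] := X ^ (p ^ (n * d)) - X with hP
  have hP0 : P ≠ 0 := FiniteField.X_pow_card_pow_sub_X_ne_zero K hnd hp.one_lt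
  have hPdeg : P.natDegree = p ^ (n * d) :=
    FiniteField.X_pow_card_pow_sub_X_natDegree_eq K hnd hp.one_lt
  have hinj : Function.Injective (fun y : ↥F⟮x⟯ =>
      (⟨y.1, by
        rw [Multiset.mem_toFinset, mem_roots hP0]
        show eval y.1 P = 0
        rw [hP]
        simp only [eval_sub, eval_pow, eval_X]
        have := hfix y.1 y.2
        rw [hg, iterateFrobenius_def] at this
        rw [this, sub_self]⟩ : {z // z ∈ P.roots.toFinset})) := by
    intro a b hab
    have h7 := congrArg (fun z : {z // z ∈ P.roots.toFinset} => z.1) hab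
    exact Subtype.ext h7
  have hle : Fintype.card ↥F⟮x⟯ ≤ p ^ (n * d) := by
    calc Fintype.card ↥F⟮x⟯ ≤ Fintype.card {z // z ∈ P.roots.toFinset} :=
          Fintype.card_le_of_injective _ hinj
      _ = P.roots.toFinset.card := Fintype.card_coe _
      _ ≤ Multiset.card P.roots := Multiset.toFinset_card_le _
      _ ≤ P.natDegree := card_roots' P
      _ = p ^ (n * d) := hPdeg
  rw [hcard, pow_mul] at hle
  have hed : e ≤ d := (Nat.pow_le_pow_iff_right (by
    exact Nat.one_lt_pow hn.ne' hp.one_lt)).mp hle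
  omega

/-- Let m be a positive integer not divisible by p and suppose d is
the multiplicative order of q modulo m (the least positive e with m ∣ q^e - 1).
Then the number of monic irreducible polynomials over F_q (q = p^n, p prime) of
degree d and order m equals φ(m)/d. -/
theorem card_irreducible_of_degree_and_order
    (p n m d : ℕ) (hp : p.Prime) (hn : 0 < n)
    (hm : 0 < m) (hpm : ¬ p ∣ m)
    (F : Type) [Field F] [Fintype F] (hF : Fintype.card F = p ^ n)
    (hd : IsLeast {e : ℕ | 0 < e ∧ m ∣ (p ^ n) ^ e - 1} d) :
    {f : Polynomial F | f.Monic ∧ Irreducible f ∧ f.natDegree = d ∧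
        orderOf (companionMatrix d f) = m}.ncard = Nat.totient m / d := by
  classical
  have hd_pos : 0 < d := hd.1.1
  -- characteristic
  obtain ⟨k, hrp, hcard'⟩ := FiniteField.card F (ringChar F)
  have hpr : p = ringChar F := by
    have h1 : p ∣ (ringChar F) ^ (k : ℕ) := by
      rw [← hcard', hF]; exact dvd_pow_self p hn.ne'
    exact (Nat.prime_dvd_prime_iff_eq hp hrp).mp (hp.dvd_of_dvd_pow h1)
  haveI : CharP F p := hpr ▸ ringChar.charP F
  -- the splitting field of X^m - 1
  have hhP0C : (X ^ m - 1 : F[X]) = X ^ m - C 1 := by rw [Polynomial.C_1]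
  have hP0ne : (X ^ m - 1 : F[X]) ≠ 0 := by rw [hhP0C]; exact X_pow_sub_C_ne_zero hm 1
  set K := (X ^ m - 1 : F[X]).SplittingField with hK
  haveI : Finite K := Module.finite_of_finite F
  haveI : Fintype K := Fintype.ofFinite K
  have hmF : (m : F) ≠ 0 := by
    rw [Ne, CharP.cast_eq_zero_iff F p]; exact hpm
  have hsep : (X ^ m - 1 : F[X]).Separable := X_pow_sub_one_separable_iff.mpr hmF
  have hsplit : Splits ((X ^ m - 1 : F[X]).map (algebraMap F K)) := SplittingField.splits (X ^ m - 1 : F[X])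
  have hP0deg : (X ^ m - 1 : F[X]).natDegree = m := by rw [hhP0C, natDegree_X_pow_sub_C]
  -- m divides card Kˣ
  have hcardroot : Fintype.card ↑((X ^ m - 1 : F[X]).rootSet K) = m := by
    rw [card_rootSet_eq_natDegree hsep hsplit, hP0deg]
  have hmdvdU : m ∣ Fintype.card Kˣ := by
    let H : Subgroup Kˣ := (powMonoidHom m : Kˣ →* Kˣ).ker
    have hbij : Function.Bijective (fun u : ↥H => (⟨((u : Kˣ) : K), by
        rw [mem_rootSet]
        refine ⟨hP0ne, ?_⟩
        have hu : ((u : Kˣ) : K) ^ m = 1 := by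
          have h1 : (powMonoidHom m : Kˣ →* Kˣ) (u : Kˣ) = 1 := u.2
          have h2 : ((powMonoidHom m (u : Kˣ) : Kˣ) : K) = ((1 : Kˣ) : K) := by
            rw [h1]
          simpa [powMonoidHom] using h2
        rw [_root_.map_sub, _root_.map_pow, aeval_X, _root_.map_one, hu, sub_self]⟩ :
          ↑((X ^ m - 1 : F[X]).rootSet K))) := by
      constructor
      · intro a b hab
        have h7 := congrArg (fun z : ↑((X ^ m - 1 : F[X]).rootSet K) => z.1) hab
        exact Subtype.ext (Units.ext h7)
      · rintro ⟨z, hz⟩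
        rw [mem_rootSet] at hz
        have hzm : z ^ m = 1 := by
          have := hz.2
          rw [_root_.map_sub, _root_.map_pow, aeval_X, _root_.map_one, sub_eq_zero] at this
          exact this
        have hz0 : z ≠ 0 := by
          intro h; rw [h, zero_pow hm.ne'] at hzm; exact zero_ne_one hzm
        have hmem : Units.mk0 z hz0 ∈ H := by
          have : (powMonoidHom m : Kˣ →* Kˣ) (Units.mk0 z hz0) = 1 := by
            apply Units.ext
            simpa [powMonoidHom] using hzm
          exact this
        exact ⟨⟨Units.mk0 z hz0, hmem⟩, rfl⟩
    have h1 := Subgroup.card_subgroup_dvd_card H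
    rw [Nat.card_eq_fintype_card, Nat.card_eq_fintype_card,
      Fintype.card_of_bijective hbij, hcardroot] at h1
    exact h1
  -- the finset of elements of order m
  set A : Finset K := Finset.univ.filter (fun x => orderOf x = m) with hA
  have hAcard : A.card = m.totient := by
    have hU : (Finset.univ.filter (fun u : Kˣ => orderOf u = m)).card = m.totient :=
      IsCyclic.card_orderOf_eq_totient hmdvdU
    rw [← hU]
    refine (Finset.card_bij (fun (u : Kˣ) _ => (u : K)) ?_ ?_ ?_).symm
    · intro u hu
      simp only [Finset.mem_filter, Finset.mem_univ, true_and] at hu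
      exact Finset.mem_filter.mpr ⟨Finset.mem_univ _, by rw [orderOf_units]; exact hu⟩
    · intro a _ b _ hab; exact Units.ext hab
    · intro x hx
      have hx : orderOf x = m := (Finset.mem_filter.mp hx).2
      have hxunit : IsUnit x := by
        apply IsUnit.of_mul_eq_one (a := x) (x ^ (m - 1))
        have h9 : m - 1 + 1 = m := by omega
        rw [← pow_succ', h9]
        exact orderOf_dvd_iff_pow_eq_one.mp (by rw [hx])
      refine ⟨hxunit.unit, ?_, hxunit.unit_spec⟩
      simp only [Finset.mem_filter, Finset.mem_univ, true_and]
      rw [← orderOf_units, hxunit.unit_spec, hx]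
  have hordA : ∀ y : K, y ∈ A → orderOf y = m := fun y hy => (Finset.mem_filter.mp hy).2
  have hmemA : ∀ y : K, orderOf y = m → y ∈ A :=
    fun y hy => Finset.mem_filter.mpr ⟨Finset.mem_univ y, hy⟩
  set Φ : K → Polynomial F := fun x => minpoly F x with hΦ
  -- forward membership
  have hmem : ∀ x ∈ A, (Φ x).Monic ∧ Irreducible (Φ x) ∧ (Φ x).natDegree = d ∧
      orderOf (companionMatrix d (Φ x)) = m := by
    intro x hx
    have ho : orderOf x = m := (Finset.mem_filter.mp hx).2
    have hint : IsIntegral F x := IsIntegral.of_finite F x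
    have hmo : (Φ x).Monic := minpoly.monic hint
    have hirr : Irreducible (Φ x) := minpoly.irreducible hint
    have hdeg : (Φ x).natDegree = d :=
      minpoly_natDegree_of_orderOf p n m d hp hn hm F hF hd K x ho
    refine ⟨hmo, hirr, hdeg, ?_⟩
    have hbr := orderOf_companionMatrix hmo hirr (minpoly.aeval F x)
    rw [hdeg] at hbr
    rw [hbr, ho]
  -- set equality
  have hSeq : {f : Polynomial F | f.Monic ∧ Irreducible f ∧ f.natDegree = d ∧
      orderOf (companionMatrix d f) = m} = ↑(A.image Φ) := by
    ext f
    simp only [Set.mem_setOf_eq, Finset.coe_image, Set.mem_image, Finset.mem_coe]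
    constructor
    · rintro ⟨hmo, hirr, hdeg, hcm⟩
      haveI : Fact (Irreducible f) := ⟨hirr⟩
      have haev : aeval (AdjoinRoot.root f) f = 0 := by
        rw [aeval_def, AdjoinRoot.algebraMap_eq]
        exact AdjoinRoot.eval₂_root f
      have hroot_ord : orderOf (AdjoinRoot.root f) = m := by
        have hbr := orderOf_companionMatrix hmo hirr haev
        rw [hdeg] at hbr
        rw [hbr] at hcm
        exact hcm
      have hdvd : f ∣ (X ^ m - 1 : F[X]) := by
        have hev : aeval (AdjoinRoot.root f) (X ^ m - 1 : F[X]) = 0 := by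
          rw [_root_.map_sub, _root_.map_pow, aeval_X, _root_.map_one]
          have h2 : (AdjoinRoot.root f) ^ m = 1 :=
            orderOf_dvd_iff_pow_eq_one.mp (by rw [hroot_ord])
          rw [h2, sub_self]
        have hfeq : f = minpoly F (AdjoinRoot.root f) :=
          minpoly.eq_of_irreducible_of_monic hirr haev hmo
        rw [hfeq]
        exact minpoly.dvd F _ hev
      have hsplitf : Splits (f.map (algebraMap F K)) :=
        hsplit.of_dvd (Polynomial.map_ne_zero hP0ne) (Polynomial.map_dvd _ hdvd)
      obtain ⟨x, hxroot⟩ := Splits.exists_eval_eq_zero hsplitf (by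
        rw [degree_map, degree_eq_natDegree hmo.ne_zero, hdeg]
        exact_mod_cast hd_pos.ne')
      have hxaev : aeval x f = 0 := by rwa [aeval_def, eval₂_eq_eval_map]
      have hxord : orderOf x = m := by
        have hbr := orderOf_companionMatrix hmo hirr hxaev
        rw [hdeg] at hbr
        rw [hbr] at hcm
        exact hcm
      exact ⟨x, hmemA x hxord, (minpoly.eq_of_irreducible_of_monic hirr hxaev hmo).symm⟩
    · rintro ⟨x, hxA, rfl⟩
      exact hmem x hxA
  rw [hSeq, Set.ncard_coe_finset]
  -- fiber counting
  have hcount : m.totient = (A.image Φ).card * d := by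
    rw [← hAcard, Finset.card_eq_sum_card_image Φ A]
    rw [Finset.sum_congr rfl (g := fun _ => d) ?_, Finset.sum_const, smul_eq_mul]
    intro f hf
    obtain ⟨x₀, hx₀, rfl⟩ := Finset.mem_image.mp hf
    obtain ⟨hmo, hirr, hdeg, hcm⟩ := hmem x₀ hx₀
    have hfilter : (A.filter (fun a => Φ a = Φ x₀)) = ((Φ x₀).aroots K).toFinset := by
      ext y
      simp only [Finset.mem_filter, Multiset.mem_toFinset, mem_aroots]
      constructor
      · rintro ⟨_, hyΦ⟩
        exact ⟨hmo.ne_zero, by rw [← hyΦ]; exact minpoly.aeval F y⟩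
      · rintro ⟨_, hev⟩
        have hyeq : Φ x₀ = minpoly F y :=
          minpoly.eq_of_irreducible_of_monic hirr hev hmo
        have hyord : orderOf y = m := by
          have hbr := orderOf_companionMatrix hmo hirr hev
          have hcm' := hcm
          rw [hdeg] at hbr
          rw [hbr] at hcm'
          exact hcm'
        exact ⟨hmemA y hyord, hyeq.symm⟩
    rw [hfilter]
    have hsepf : (Φ x₀).Separable := PerfectField.separable_of_irreducible hirr
    have hsplitf : Splits ((Φ x₀).map (algebraMap F K)) := by
      have hdvd : Φ x₀ ∣ (X ^ m - 1 : F[X]) := by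
        apply minpoly.dvd F x₀
        rw [_root_.map_sub, _root_.map_pow, aeval_X, _root_.map_one]
        have h2 : x₀ ^ m = 1 :=
          orderOf_dvd_iff_pow_eq_one.mp (by rw [hordA x₀ hx₀])
        rw [h2, sub_self]
      exact hsplit.of_dvd (Polynomial.map_ne_zero hP0ne) (Polynomial.map_dvd _ hdvd)
    rw [Multiset.toFinset_card_of_nodup (nodup_roots (hsepf.map)),
      ← hsplitf.natDegree_eq_card_roots, natDegree_map, hdeg]
  rw [hcount, Nat.mul_div_cancel _ hd_pos]
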